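/- Let A and B be Banach algebras, T ∈ hom(B, A), and φ a character on A. An element (Φ,Ψ) ∈ A'' ×_{T''} B'' is (φ, φ∘T)-topologically left invariant with ⟨(Φ,Ψ),(φ,φ∘T)⟩ ≠ 0 if and only if Ψ = 0 and Φ is φ-topologically left invariant with Φ(φ) ≠ 0. -/

import Mathlib

open ContinuousLinearMap NormedSpace

variable {A B : Type*}
  [NonUnitalNormedRing A] [NormedSpace ℂ A] [IsScalarTower ℂ A A] [SMulCommClass ℂ A A]
  [CompleteSpace A]
  [NonUnitalNormedRing B] [NormedSpace ℂ B] [IsScalarTower ℂ B B] [SMulCommClass ℂ B B]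
  [CompleteSpace B]

/-- The morphism-product multiplication on `A × B`:
`(a₁,b₁)·(a₂,b₂) = (a₁a₂ + a₁T(b₂) + T(b₁)a₂, b₁b₂)`. -/
noncomputable def tMul (T : B →L[ℂ] A) (u v : A × B) : A × B :=
  (u.1 * v.1 + u.1 * T v.2 + T u.2 * v.1, u.2 * v.2)

/-- The ℓ¹ norm `‖(a,b)‖ = ‖a‖ + ‖b‖` on `A × B`. -/
noncomputable def tNorm (u : A × B) : ℝ := ‖u.1‖ + ‖u.2‖

/-- Auxiliary map: for `Φ` in the second dual of `E` and a bundled bilinear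
multiplication `M` on `E`, this is `f ↦ (a ↦ Φ (f ∘ M a))`, i.e. `f ↦ Φ · f`. -/
noncomputable def rAct {E : Type*} [NormedAddCommGroup E] [NormedSpace ℂ E]
    (M : E →L[ℂ] E →L[ℂ] E) (Φ : StrongDual ℂ (StrongDual ℂ E)) : StrongDual ℂ E →L[ℂ] StrongDual ℂ E :=
  (compL ℂ E (StrongDual ℂ E) ℂ Φ).comp
    (((compL ℂ E (E →L[ℂ] E) (StrongDual ℂ E)).flip M).comp (compL ℂ E E ℂ))

/-- The first Arens product `Φ □ Ψ` on the second dual of `E`, where the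
multiplication of `E` is given by the bundled bilinear map `M`:
`⟨Φ□Ψ, f⟩ = ⟨Φ, Ψ·f⟩` with `(Ψ·f)(a) = Ψ(f·a)` and `(f·a)(x) = f(ax)`. -/
noncomputable def arens1 {E : Type*} [NormedAddCommGroup E] [NormedSpace ℂ E]
    (M : E →L[ℂ] E →L[ℂ] E) (Φ Ψ : StrongDual ℂ (StrongDual ℂ E)) : StrongDual ℂ (StrongDual ℂ E) :=
  Φ.comp (rAct M Ψ)

/-- The second Arens product `Φ ◊ Ψ` on the second dual of `E`:
`⟨Φ◊Ψ, f⟩ = ⟨Ψ, f·Φ⟩` with `(f·Φ)(a) = Φ(a·f)` and `(a·f)(x) = f(xa)`. -/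
noncomputable def arens2 {E : Type*} [NormedAddCommGroup E] [NormedSpace ℂ E]
    (M : E →L[ℂ] E →L[ℂ] E) (Φ Ψ : StrongDual ℂ (StrongDual ℂ E)) : StrongDual ℂ (StrongDual ℂ E) :=
  Ψ.comp (rAct M.flip Φ)

/-- Bundled bilinear map `(u,v) ↦ M (f u) (g v)`. -/
noncomputable def bcomp {P E : Type*} [NormedAddCommGroup P] [NormedSpace ℂ P]
    [NormedAddCommGroup E] [NormedSpace ℂ E]
    (M : E →L[ℂ] E →L[ℂ] E) (f g : P →L[ℂ] E) : P →L[ℂ] P →L[ℂ] E :=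
  ((compL ℂ P E E).flip g).comp (M.comp f)

/-- The morphism-product multiplication `tMul T`, as a bundled bilinear map;
`tMulCLM T u v = tMul T u v`. -/
noncomputable def tMulCLM (T : B →L[ℂ] A) : (A × B) →L[ℂ] (A × B) →L[ℂ] (A × B) :=
  ((compL ℂ (A × B) A (A × B) (inl ℂ A B)).comp
    (bcomp (mul ℂ A) (fst ℂ A B) (fst ℂ A B + T.comp (snd ℂ A B)) +
     bcomp (mul ℂ A) (T.comp (snd ℂ A B)) (fst ℂ A B))) +
  ((compL ℂ (A × B) B (A × B) (inr ℂ A B)).comp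
    (bcomp (mul ℂ B) (snd ℂ A B) (snd ℂ A B)))

/-- The adjoint `T' : A' → B'`, `T'(f) = f ∘ T`. -/
noncomputable def dualT (T : B →L[ℂ] A) : StrongDual ℂ A →L[ℂ] StrongDual ℂ B := (compL ℂ B A ℂ).flip T

/-- The double adjoint `T'' : B'' → A''`, `T''(F) = F ∘ T'`. -/
noncomputable def ddT (T : B →L[ℂ] A) : StrongDual ℂ (StrongDual ℂ B) →L[ℂ] StrongDual ℂ (StrongDual ℂ A) :=
  (compL ℂ (StrongDual ℂ A) (StrongDual ℂ B) ℂ).flip (dualT T)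

/-- The identification `Θ : A'' × B'' → (A × B)''`, `Θ(Φ,Ψ)(F) = Φ(F∘inl) + Ψ(F∘inr)`,
i.e. `Θ(Φ,Ψ)(f,g) = Φ(f) + Ψ(g)` under the identification `(A × B)' ≅ A' × B'`. -/
noncomputable def Theta (Φ : StrongDual ℂ (StrongDual ℂ A)) (Ψ : StrongDual ℂ (StrongDual ℂ B)) :
    StrongDual ℂ (StrongDual ℂ (A × B)) :=
  Φ.comp ((compL ℂ A (A × B) ℂ).flip (inl ℂ A B)) +
  Ψ.comp ((compL ℂ B (A × B) ℂ).flip (inr ℂ A B))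

/-- The functional `(a,b) ↦ φ(a) + φ(T(b))` on `A × B`, for `φ : A → ℂ`. -/
noncomputable def charExt (T : B →L[ℂ] A) (φ : A →L[ℂ] ℂ) : (A × B) →L[ℂ] ℂ :=
  φ.comp (fst ℂ A B) + (φ.comp T).comp (snd ℂ A B)

/-- The functional `(a,b) ↦ ψ(b)` on `A × B`, for `ψ : B → ℂ`. -/
noncomputable def charSnd (ψ : B →L[ℂ] ℂ) : (A × B) →L[ℂ] ℂ :=
  ψ.comp (snd ℂ A B)


section Aux

lemma rAct_apply {E : Type*} [NormedAddCommGroup E] [NormedSpace ℂ E]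
    (M : E →L[ℂ] E →L[ℂ] E) (Ψ : StrongDual ℂ (StrongDual ℂ E)) (f : StrongDual ℂ E) (a : E) :
    rAct M Ψ f a = Ψ (f.comp (M a)) := rfl

lemma arens1_apply {E : Type*} [NormedAddCommGroup E] [NormedSpace ℂ E]
    (M : E →L[ℂ] E →L[ℂ] E) (Φ Ψ : StrongDual ℂ (StrongDual ℂ E)) (f : StrongDual ℂ E) :
    arens1 M Φ Ψ f = Φ (rAct M Ψ f) := rfl

lemma Theta_apply (Φ : StrongDual ℂ (StrongDual ℂ A)) (Ψ : StrongDual ℂ (StrongDual ℂ B))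
    (F : StrongDual ℂ (A × B)) :
    Theta Φ Ψ F = Φ (F.comp (inl ℂ A B)) + Ψ (F.comp (inr ℂ A B)) := rfl

lemma tMulCLM_apply (T : B →L[ℂ] A) (u v : A × B) :
    tMulCLM T u v = tMul T u v := by
  simp [tMulCLM, bcomp, tMul, Prod.ext_iff]

lemma arens1_mul_apply (Φ : StrongDual ℂ (StrongDual ℂ A)) (a : A) (f : StrongDual ℂ A) :
    arens1 (mul ℂ A) Φ (inclusionInDoubleDual ℂ A a) f
      = Φ (f.comp ((mul ℂ A).flip a)) := by
  rfl

lemma key (T : B →L[ℂ] A) (Φ : StrongDual ℂ (StrongDual ℂ A)) (Ψ : StrongDual ℂ (StrongDual ℂ B))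
    (u : A × B) (F : StrongDual ℂ (A × B)) :
    arens1 (tMulCLM T) (Theta Φ Ψ) (inclusionInDoubleDual ℂ (A × B) u) F
      = Φ ((F.comp (inl ℂ A B)).comp ((mul ℂ A).flip (u.1 + T u.2)))
      + Ψ ((F.comp (inl ℂ A B)).comp (((mul ℂ A).flip u.1).comp T)
          + (F.comp (inr ℂ A B)).comp ((mul ℂ B).flip u.2)) := by
  rw [arens1_apply, Theta_apply]
  congr 2
  · ext a
    simp only [rAct_apply, dual_def, ContinuousLinearMap.comp_apply, tMulCLM_apply, tMul,
      ContinuousLinearMap.add_apply, flip_apply, mul_apply', inl_apply, map_zero, mul_zero,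
      zero_mul, add_zero, mul_add]
  · ext b
    simp only [rAct_apply, dual_def, ContinuousLinearMap.comp_apply, tMulCLM_apply, tMul,
      ContinuousLinearMap.add_apply, flip_apply, mul_apply', inl_apply, inr_apply, map_zero,
      mul_zero, zero_mul, add_zero, zero_add]
    rw [← map_add, Prod.mk_add_mk, add_zero, zero_add]

end Aux

/-- for a character `φ` on `A`, `(Φ,Ψ)` is `(φ,φ∘T)`-topologically left
invariant with `⟨(Φ,Ψ),(φ,φ∘T)⟩ = Φ(φ) + Ψ(φ∘T) ≠ 0` iff `Ψ = 0` and `Φ` is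
`φ`-topologically left invariant with `Φ(φ) ≠ 0`. -/
theorem tli_for_charExt
    (T : B →L[ℂ] A) (hT : ∀ x y, T (x * y) = T x * T y) (hTn : ‖T‖ ≤ 1)
    (φ : A →L[ℂ] ℂ) (hφ0 : φ ≠ 0) (hφm : ∀ x y : A, φ (x * y) = φ x * φ y)
    (Φ : StrongDual ℂ (StrongDual ℂ A)) (Ψ : StrongDual ℂ (StrongDual ℂ B)) :
    ((∀ u : A × B,
        arens1 (tMulCLM T) (Theta Φ Ψ) (inclusionInDoubleDual ℂ (A × B) u) =
          (φ u.1 + φ (T u.2)) • Theta Φ Ψ) ∧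
      Φ φ + Ψ (φ.comp T) ≠ 0) ↔
    (Ψ = 0 ∧
      (∀ a : A, arens1 (mul ℂ A) Φ (inclusionInDoubleDual ℂ A a) = φ a • Φ) ∧
      Φ φ ≠ 0) := by
  constructor
  · rintro ⟨h, hne⟩
    obtain ⟨a₀, ha₀⟩ : ∃ a : A, φ a ≠ 0 := by
      by_contra hc
      push_neg at hc
      exact hφ0 (by ext a; simpa using hc a)
    have hΨ : Ψ = 0 := by
      ext ψ
      have h0 := congrArg (fun G : StrongDual ℂ (StrongDual ℂ (A × B)) => G (charSnd ψ)) (h (a₀, 0))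
      simp only [key, ContinuousLinearMap.smul_apply, Theta_apply] at h0
      have e1 : ((charSnd ψ : (A × B) →L[ℂ] ℂ).comp (inl ℂ A B)) = 0 := by
        ext a; simp [charSnd]
      have e2 : ((charSnd ψ : (A × B) →L[ℂ] ℂ).comp (inr ℂ A B)) = ψ := by
        ext b; simp [charSnd]
      rw [e1, e2] at h0
      simp only [map_zero, zero_add, add_zero, zero_comp, ContinuousLinearMap.comp_zero] at h0
      have h1 := (smul_eq_zero.mp h0.symm).resolve_left ha₀
      simpa using h1
    have hΦφ : Φ φ ≠ 0 := by
      simpa [hΨ] using hne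
    refine ⟨hΨ, fun a => ?_, hΦφ⟩
    ext f
    have h0 := congrArg (fun G : StrongDual ℂ (StrongDual ℂ (A × B)) => G (f.comp (fst ℂ A B))) (h (a, 0))
    simp only [key, ContinuousLinearMap.smul_apply, Theta_apply, hΨ,
      ContinuousLinearMap.zero_apply, add_zero] at h0
    have e1 : ((f.comp (fst ℂ A B)).comp (inl ℂ A B)) = f := by
      ext x; simp
    rw [e1] at h0
    rw [arens1_mul_apply]
    simpa using h0
  · rintro ⟨hΨ, hTLI, hΦ⟩
    subst hΨ
    refine ⟨fun u => ?_, by simpa using hΦ⟩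
    ext F
    rw [key]
    simp only [map_zero, add_zero, ContinuousLinearMap.smul_apply, Theta_apply,
      ContinuousLinearMap.zero_apply]
    have := congrArg (fun G : StrongDual ℂ (StrongDual ℂ A) => G (F.comp (inl ℂ A B)))
      (hTLI (u.1 + T u.2))
    simp only [arens1_mul_apply, ContinuousLinearMap.smul_apply, smul_eq_mul] at this ⊢
    rw [this, map_add]
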